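/- If z ∈ (τ/2)ℤ then φ_z ∉ L^{2,∞}(𝔛), i.e. sup_{t>0} t·(#{x ∈ 𝔛 : |φ_z(x)| > t})^{1/2} = ∞; whereas if z ∈ ℝ \ (τ/2)ℤ then φ_z ∈ L^{2,∞}(𝔛). -/

import Mathlib

open Complex MeasureTheory ENNReal Filter

noncomputable section

/-- A homogeneous tree of degree `q + 1`: a connected acyclic graph in which every
vertex has exactly `q + 1` neighbours, together with a fixed reference vertex `o`. -/
structure HomTree (q : ℕ) where
  X : Type
  G : SimpleGraph X
  connected : G.Connected
  acyclic : G.IsAcyclic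
  regular : ∀ x : X, (G.neighborSet x).ncard = q + 1
  o : X

namespace HomTree

/-- `τ = 2π / log q`. -/
def tau (q : ℕ) : ℝ := 2 * Real.pi / Real.log q

/-- The meromorphic `c`-function. -/
def cfun (q : ℕ) (z : ℂ) : ℂ :=
  ((q : ℂ) ^ ((1 : ℂ) / 2) / ((q : ℂ) + 1)) *
    (((q : ℂ) ^ ((1 : ℂ) / 2 + I * z) - (q : ℂ) ^ (-(1 : ℂ) / 2 - I * z)) /
      ((q : ℂ) ^ (I * z) - (q : ℂ) ^ (-(I * z))))

/-- The coefficients `B′(n,m,s)`. -/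
def Bp (q : ℕ) (s : ℝ) (n m : ℕ) : ℂ :=
  if n = 0 then
    (q : ℂ) ^ (-(I * (s : ℂ) * (m : ℂ))) +
      cfun q (s : ℂ) * ((q : ℂ) ^ (I * (s : ℂ) * (m : ℂ)) - (q : ℂ) ^ (-(I * (s : ℂ) * (m : ℂ))))
  else
    cfun q (s : ℂ) * (q : ℂ) ^ (I * (s : ℂ) * ((n : ℂ) - 1)) *
      ((q : ℂ) ^ (I * (s : ℂ) * ((m : ℂ) - (n : ℂ) + 1)) -
        (q : ℂ) ^ (-(I * (s : ℂ) * ((m : ℂ) - (n : ℂ) + 1))))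

variable {q : ℕ} (T : HomTree q)

/-- Counting measurable structure on the vertices. -/
instance : MeasurableSpace T.X := ⊤

/-- `|x| = d(o, x)`. -/
def nrm (x : T.X) : ℕ := T.G.dist T.o x

open Classical in
/-- The elementary spherical function `φ_z`. -/
def sph (z : ℂ) (x : T.X) : ℂ :=
  if ∃ k : ℤ, z = (k : ℂ) * (tau q : ℂ) then
    ((((q : ℂ) - 1) / ((q : ℂ) + 1)) * (T.nrm x : ℂ) + 1) * (q : ℂ) ^ (-(T.nrm x : ℂ) / 2)
  else if ∃ k : ℤ, z = (tau q : ℂ) / 2 + (k : ℂ) * (tau q : ℂ) then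
    (-1) ^ (T.nrm x) * ((((q : ℂ) - 1) / ((q : ℂ) + 1)) * (T.nrm x : ℂ) + 1) *
      (q : ℂ) ^ (-(T.nrm x : ℂ) / 2)
  else
    cfun q z * (q : ℂ) ^ ((I * z - 1 / 2) * (T.nrm x : ℂ)) +
      cfun q (-z) * (q : ℂ) ^ ((-(I * z) - 1 / 2) * (T.nrm x : ℂ))

/-- A function on the tree is radial if it depends only on `|x|`. -/
def Radial (f : T.X → ℂ) : Prop := ∀ x y : T.X, T.nrm x = T.nrm y → f x = f y

/-- The weak `L^r` quasinorm `sup_{t>0} t · μ(|u| > t)^{1/r}` (w.r.t. the counting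
measure when the underlying measurable space carries `Measure.count`). -/
def weakN {Y : Type} [MeasurableSpace Y] (r : ℝ) (u : Y → ℂ) : ℝ≥0∞ :=
  ⨆ t : ℝ, ENNReal.ofReal t * (Measure.count {y | t < ‖u y‖}) ^ (1 / r)

/-- The Lorentz `L^{r,1}` norm `(1/r)∫₀^∞ u*(t) t^{1/r-1} dt`, written in the equivalent
layer-cake form `∫₀^∞ μ(|u| > s)^{1/r} ds`. -/
def lorN1 {Y : Type} [MeasurableSpace Y] (r : ℝ) (u : Y → ℂ) : ℝ≥0∞ :=
  ∫⁻ s in Set.Ioi (0 : ℝ), (Measure.count {y | s < ‖u y‖}) ^ (1 / r)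

/-- The boundary `Ω`: infinite geodesic rays starting at `o`. -/
structure Boundary where
  seq : ℕ → T.X
  start : seq 0 = T.o
  adj : ∀ n, T.G.Adj (seq n) (seq (n + 1))
  dist_eq : ∀ n, T.G.dist T.o (seq n) = n

/-- The basic boundary set `E(x) = {ω : ω_{|x|} = x}`. -/
def E (x : T.X) : Set T.Boundary := {ω | ω.seq (T.nrm x) = x}

/-- The σ-algebra on `Ω` generated by the sets `E(x)`. -/
instance : MeasurableSpace T.Boundary :=
  MeasurableSpace.generateFrom {S | ∃ x : T.X, S = T.E x}

/-- `|c(x,ω)|`: the distance from `o` of the last vertex on the geodesic from `o` to `x`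
lying on the ray `ω`. -/
def confl (ω : T.Boundary) (x : T.X) : ℕ :=
  Nat.findGreatest (fun n => n + T.G.dist (ω.seq n) x = T.nrm x) (T.nrm x)

/-- The Poisson kernel `p(x,ω) = q^{h_ω(x)} = q^{2|c(x,ω)| - |x|}`. -/
def pker (ω : T.Boundary) (x : T.X) : ℝ :=
  (q : ℝ) ^ ((2 * (T.confl ω x) : ℤ) - (T.nrm x : ℤ))

/-- The Poisson transform `P_z F(x) = ∫_Ω p(x,ω)^{1/2+iz} F(ω) dν(ω)`. -/
def ptrans (ν : Measure T.Boundary) (z : ℂ) (F : T.Boundary → ℂ) (x : T.X) : ℂ :=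
  ∫ ω, ((T.pker ω x : ℂ) ^ ((1 : ℂ) / 2 + I * z)) * F ω ∂ν

/-- The Laplacian `ℒu(x) = (q+1)⁻¹ ∑_{y ∼ x} u(y)`. -/
def lap (u : T.X → ℂ) (x : T.X) : ℂ :=
  (1 / ((q : ℂ) + 1)) * ∑' y : T.G.neighborSet x, u y

/-- `γ(z) = (q^{1/2+iz} + q^{1/2-iz})/(q+1)`. -/
def gam (q : ℕ) (z : ℂ) : ℂ :=
  ((q : ℂ) ^ ((1 : ℂ) / 2 + I * z) + (q : ℂ) ^ ((1 : ℂ) / 2 - I * z)) / ((q : ℂ) + 1)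

/-- The conditional expectation `ℰ_n F(ω) = ν(E(ω_n))⁻¹ ∫_{E(ω_n)} F dν` (real valued). -/
def condE (ν : Measure T.Boundary) (F : T.Boundary → ℝ) (n : ℕ) (ω : T.Boundary) : ℝ :=
  (ν {ω' : T.Boundary | ω'.seq n = ω.seq n}).toReal⁻¹ *
    ∫ ω' in {ω' : T.Boundary | ω'.seq n = ω.seq n}, F ω' ∂ν

/-- The conditional expectation (complex valued). -/
def condEC (ν : Measure T.Boundary) (F : T.Boundary → ℂ) (n : ℕ) (ω : T.Boundary) : ℂ :=
  (((ν {ω' : T.Boundary | ω'.seq n = ω.seq n}).toReal⁻¹ : ℝ) : ℂ) *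
    ∫ ω' in {ω' : T.Boundary | ω'.seq n = ω.seq n}, F ω' ∂ν

/-- The martingale maximal function `ℰF(ω) = sup_n |ℰ_n F(ω)|`, valued in `[0,∞]`. -/
def maximal (ν : Measure T.Boundary) (F : T.Boundary → ℝ) (ω : T.Boundary) : ℝ≥0∞ :=
  ⨆ n : ℕ, ENNReal.ofReal |T.condE ν F n ω|

/-- The martingale difference `Δ_n F = ℰ_n F - ℰ_{n-1} F`, with `ℰ_{-1} = 0`. -/
def deltaC (ν : Measure T.Boundary) (F : T.Boundary → ℂ) (n : ℕ) (ω : T.Boundary) : ℂ :=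
  T.condEC ν F n ω - if n = 0 then 0 else T.condEC ν F (n - 1) ω

/-- `y` and `x` have the same `n`-th vertex on their geodesics from `o`. -/
def sameAt (n : ℕ) (x y : T.X) : Prop :=
  ∃ v : T.X, T.nrm v = n ∧ T.nrm v + T.G.dist v x = T.nrm x ∧ T.nrm v + T.G.dist v y = T.nrm y

/-- `S(n,x)`: `{x}` if `|x| ≤ n`, and `{y : |y| = |x|, y_n = x_n}` otherwise. -/
def sphereSet (n : ℕ) (x : T.X) : Set T.X :=
  if T.nrm x ≤ n then {x} else {y | T.nrm y = T.nrm x ∧ T.sameAt n x y}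

open Classical in
/-- `ε_n u(x) = (#S(n,x))⁻¹ ∑_{y ∈ S(n,x)} u(y)`. -/
def epsOp (n : ℕ) (u : T.X → ℂ) (x : T.X) : ℂ :=
  (((T.sphereSet n x).ncard : ℂ))⁻¹ * ∑' y : T.sphereSet n x, u y

/-- The ball `B(x,r)`. -/
def ball (x : T.X) (r : ℕ) : Set T.X := {y | T.G.dist x y ≤ r}

/-- `ℳu(x) = sup_{r ≥ 1} (#B(x,r))^{-1/2} ∑_{y ∈ B(x,r)} |u(y)|`, valued in `[0,∞]`. -/
def maxOp (u : T.X → ℂ) (x : T.X) : ℝ≥0∞ :=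
  ⨆ r : ℕ+, (Measure.count (T.ball x (r : ℕ))) ^ (-(1 : ℝ) / 2) *
    ∑' y : T.ball x (r : ℕ), ENNReal.ofReal (‖u y‖)

/-- The Helgason–Fourier transform `f̃(z,ω) = ∑_x f(x) p(x,ω)^{1/2+iz}`. -/
def hft (f : T.X → ℂ) (z : ℂ) (ω : T.Boundary) : ℂ :=
  ∑' x : T.X, f x * ((T.pker ω x : ℂ) ^ ((1 : ℂ) / 2 + I * z))

end HomTree

namespace HomTree

variable {q : ℕ} (T : HomTree q)

instance : MeasurableSingletonClass T.X := ⟨fun _ => MeasurableSpace.measurableSet_top⟩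

instance : DecidableEq T.X := Classical.decEq _

open Classical in
lemma isPath_concat {a b : T.X} {p : T.G.Walk T.o a} (hp : p.IsPath) (h : T.G.Adj a b)
    (hb : b ∉ p.support) : (p.concat h).IsPath := by
  have h1 : (p.concat h).reverse = SimpleGraph.Walk.cons h.symm p.reverse :=
    SimpleGraph.Walk.reverse_concat p h
  have h2 : (SimpleGraph.Walk.cons h.symm p.reverse).IsPath :=
    hp.reverse.cons (by simpa [SimpleGraph.Walk.support_reverse] using hb)
  have := h2.reverse
  rwa [← h1, SimpleGraph.Walk.reverse_reverse] at this

lemma isTree : T.G.IsTree := ⟨T.connected, T.acyclic⟩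

lemma path_unique {a b : T.X} {p p' : T.G.Walk a b} (hp : p.IsPath) (hp' : p'.IsPath) :
    p = p' := by
  obtain ⟨w, hw, hw'⟩ := T.isTree.existsUnique_path a b
  rw [hw' p hp, hw' p' hp']

lemma length_eq_dist {a b : T.X} (p : T.G.Walk a b) (hp : p.IsPath) :
    p.length = T.G.dist a b := by
  obtain ⟨w, hwp, hwl⟩ := T.connected.exists_path_of_dist a b
  rw [T.path_unique hp hwp, hwl]

lemma nrm_eq_zero_iff {x : T.X} : T.nrm x = 0 ↔ x = T.o := by
  rw [nrm, T.connected.dist_eq_zero_iff, eq_comm]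

lemma nrm_o : T.nrm T.o = 0 := T.nrm_eq_zero_iff.2 rfl

/-- on a path from `o`, every vertex has nrm ≤ length -/
lemma nrm_le_of_mem_support {x y : T.X} (p : T.G.Walk T.o x) (hp : p.IsPath)
    (hy : y ∈ p.support) : T.nrm y ≤ p.length := by
  have h1 := T.length_eq_dist (p.takeUntil y hy) (hp.takeUntil hy)
  have h2 := p.length_takeUntil_le hy
  rw [h1] at h2
  exact h2

lemma adj_nrm {a b : T.X} (h : T.G.Adj a b) :
    T.nrm b = T.nrm a + 1 ∨ T.nrm a = T.nrm b + 1 := by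
  -- distances to adjacent vertices differ by exactly one in a tree
  rcases T.connected.exists_path_of_dist T.o a with ⟨p, hp, hpl⟩
  by_cases hb : b ∈ p.support
  · -- b on path to a: then takeUntil b is the path to b, and appending edge b-a? use other dir
    right
    have hq : (p.takeUntil b hb).IsPath := hp.takeUntil hb
    -- path o → b, then need dist o a = dist o b + 1
    -- consider path to b, concat edge to a must equal p
    have hbl := T.length_eq_dist _ hq
    -- walk o → b → a
    by_cases hab : a ∈ (p.takeUntil b hb).support
    · -- a on path to b and b on path to a: impossible unless ... a appears in takeUntil; but
      -- a is endpoint of p; takeUntil is a prefix; a on it means a appears before b too.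
      exfalso
      have hsup : p.support = (p.takeUntil b hb).support ++ (p.dropUntil b hb).support.tail := by
        conv_lhs => rw [← SimpleGraph.Walk.take_spec p hb]
        rw [SimpleGraph.Walk.support_append]
      have hnd := hp.support_nodup
      rw [hsup, List.nodup_append] at hnd
      exact hnd.2.2 a hab a (SimpleGraph.Walk.end_mem_tail_support_of_ne h.ne' _) rfl
    · have hw : ((p.takeUntil b hb).concat h.symm).IsPath := T.isPath_concat hq h.symm hab
      have := T.length_eq_dist _ hw
      rw [SimpleGraph.Walk.length_concat, hbl] at this
      rw [nrm, nrm, ← this]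
  · left
    have hw : (p.concat h).IsPath := T.isPath_concat hp h hb
    have := T.length_eq_dist _ hw
    rw [SimpleGraph.Walk.length_concat, hpl] at this
    rw [nrm, nrm, ← this]

/-- every vertex of positive norm has a parent -/
lemma exists_parent {x : T.X} {n : ℕ} (hx : T.nrm x = n + 1) :
    ∃ v, T.G.Adj v x ∧ T.nrm v = n := by
  have hxo : x ≠ T.o := by
    intro h; rw [h, nrm_o] at hx; omega
  obtain ⟨p, hp, hpl⟩ := T.connected.exists_path_of_dist T.o x
  obtain ⟨v, h, q', hq⟩ := SimpleGraph.Walk.exists_eq_cons_of_ne hxo p.reverse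
  refine ⟨v, h.symm, ?_⟩
  have hq'p : q'.IsPath := by
    have := hp.reverse; rw [hq] at this; exact this.of_cons
  have : q'.reverse.length = T.G.dist T.o v := T.length_eq_dist q'.reverse hq'p.reverse
  have hlen : q'.length + 1 = p.length := by
    have := congrArg SimpleGraph.Walk.length hq
    simpa [SimpleGraph.Walk.length_reverse] using this.symm
  rw [nrm] at hx ⊢
  rw [hpl] at hlen
  rw [SimpleGraph.Walk.length_reverse] at this
  omega

lemma parent_eq {x v : T.X} {n : ℕ} (hx : T.nrm x = n + 1) (hv : T.G.Adj v x)
    (hvn : T.nrm v = n) : ∀ v', T.G.Adj v' x → T.nrm v' = n → v' = v := by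
  -- both concat paths are THE path o → x; compare getVert n
  intro v' hv' hvn'
  obtain ⟨p, hp, hpl⟩ := T.connected.exists_path_of_dist T.o v
  obtain ⟨p', hp', hpl'⟩ := T.connected.exists_path_of_dist T.o v'
  have hxp : x ∉ p.support := fun hmem => by
    have := T.nrm_le_of_mem_support p hp hmem
    rw [hpl] at this; rw [nrm] at *; omega
  have hxp' : x ∉ p'.support := fun hmem => by
    have := T.nrm_le_of_mem_support p' hp' hmem
    rw [hpl'] at this; rw [nrm] at *; omega
  have h1 : (p.concat hv).IsPath := T.isPath_concat hp hv hxp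
  have h2 : (p'.concat hv').IsPath := T.isPath_concat hp' hv' hxp'
  have heq : p.concat hv = p'.concat hv' := T.path_unique h1 h2
  have hg : (p.concat hv).getVert n = v := by
    rw [SimpleGraph.Walk.concat_eq_append, SimpleGraph.Walk.getVert_append]
    have : ¬ n < p.length := by rw [hpl]; rw [nrm] at hvn; omega
    rw [if_neg this]
    simp [hpl, hvn.symm, nrm]
  have hg' : (p'.concat hv').getVert n = v' := by
    rw [SimpleGraph.Walk.concat_eq_append, SimpleGraph.Walk.getVert_append]
    have : ¬ n < p'.length := by rw [hpl']; rw [nrm] at hvn'; omega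
    rw [if_neg this]
    simp [hpl', hvn'.symm, nrm]
  rw [← hg, ← hg', heq]

/-- The children of a vertex. -/
def children (v : T.X) : Set T.X := {y | T.G.Adj v y ∧ T.nrm y = T.nrm v + 1}

lemma neighborSet_finite (v : T.X) : (T.G.neighborSet v).Finite := by
  by_contra h
  have := Set.Infinite.ncard (s := T.G.neighborSet v) (by simpa using h)
  rw [T.regular v] at this
  omega

lemma children_finite (v : T.X) : (T.children v).Finite :=
  (T.neighborSet_finite v).subset (fun y hy => hy.1)

lemma children_ncard_root : (T.children T.o).ncard = q + 1 := by
  have : T.children T.o = T.G.neighborSet T.o := by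
    ext y
    simp only [children, SimpleGraph.mem_neighborSet, Set.mem_setOf_eq, T.nrm_o]
    refine ⟨fun h => h.1, fun h => ⟨h, ?_⟩⟩
    rcases T.adj_nrm h with h1 | h1
    · rw [h1, T.nrm_o]
    · exfalso; rw [T.nrm_o] at h1; omega
  rw [this, T.regular]

lemma children_ncard {v : T.X} {n : ℕ} (hv : T.nrm v = n + 1) : (T.children v).ncard = q := by
  obtain ⟨w, hw, hwn⟩ := T.exists_parent hv
  have hsub : T.children v = T.G.neighborSet v \ {w} := by
    ext y
    simp only [children, SimpleGraph.mem_neighborSet, Set.mem_diff, Set.mem_setOf_eq,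
      Set.mem_singleton_iff, hv]
    constructor
    · rintro ⟨hadj, hy⟩
      refine ⟨hadj, fun hyw => ?_⟩
      rw [hyw, hwn] at hy; omega
    · rintro ⟨hadj, hyw⟩
      refine ⟨hadj, ?_⟩
      rcases T.adj_nrm hadj with h1 | h1
      · rw [h1, hv]
      · exfalso
        have : T.nrm y = n := by omega
        exact hyw (T.parent_eq hv hw hwn y hadj.symm this)
  rw [hsub, Set.ncard_diff_singleton_of_mem (by exact hw.symm), T.regular]
  omega

/-- The sphere of radius `n` about `o`. -/
def Sph (n : ℕ) : Set T.X := {x | T.nrm x = n}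

lemma sph_zero : T.Sph 0 = {T.o} := by
  ext x; simp [Sph, T.nrm_eq_zero_iff]

lemma sph_succ (n : ℕ) : T.Sph (n + 1) = ⋃ v ∈ T.Sph n, T.children v := by
  ext x
  simp only [Sph, Set.mem_setOf_eq, Set.mem_iUnion, exists_prop]
  constructor
  · intro hx
    obtain ⟨v, hv, hvn⟩ := T.exists_parent hx
    exact ⟨v, hvn, hv, by omega⟩
  · rintro ⟨v, hv, hadj, hn⟩
    omega

lemma sph_finite_card : ∀ n : ℕ, (T.Sph n).Finite ∧
    (T.Sph n).ncard = if n = 0 then 1 else (q + 1) * q ^ (n - 1) := by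
  intro n
  induction n with
  | zero => rw [T.sph_zero]; exact ⟨Set.finite_singleton _, by simp⟩
  | succ n ih =>
    obtain ⟨hfin, hcard⟩ := ih
    have hfin' : (T.Sph (n+1)).Finite := by
      rw [T.sph_succ]
      exact Set.Finite.biUnion hfin (fun v _ => T.children_finite v)
    refine ⟨hfin', ?_⟩
    classical
    -- convert to Finsets
    set F : Finset T.X := hfin.toFinset with hF
    have hteq : hfin'.toFinset = F.biUnion (fun v => (T.children_finite v).toFinset) := by
      ext x
      simp only [Set.Finite.mem_toFinset, Finset.mem_biUnion, hF, T.sph_succ]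
      simp [Set.mem_iUnion]
    have hdisj : ∀ v ∈ F, ∀ v' ∈ F, v ≠ v' →
        Disjoint ((T.children_finite v).toFinset) ((T.children_finite v').toFinset) := by
      intro v hv v' hv' hne
      rw [Finset.disjoint_left]
      intro y hy hy'
      rw [Set.Finite.mem_toFinset] at hy hy'
      rw [hF, Set.Finite.mem_toFinset] at hv hv'
      have hvn : T.nrm v = n := hv
      have hvn' : T.nrm v' = n := hv'
      have hyn : T.nrm y = n + 1 := by rw [hy.2, hvn]
      exact hne ((T.parent_eq hyn hy.1 hvn v' hy'.1 hvn').symm)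
    have h1 : (T.Sph (n+1)).ncard = hfin'.toFinset.card := Set.ncard_eq_toFinset_card _ hfin'
    rw [h1, hteq, Finset.card_biUnion hdisj]
    have hFcard : F.card = if n = 0 then 1 else (q + 1) * q ^ (n - 1) := by
      rw [hF, ← Set.ncard_eq_toFinset_card _ hfin, hcard]
    rcases Nat.eq_zero_or_pos n with hn0 | hnpos
    · subst hn0
      have hFo : F = {T.o} := by
        rw [hF]; ext x; simp [T.sph_zero]
      rw [hFo]
      simp only [Finset.sum_singleton]
      rw [← Set.ncard_eq_toFinset_card _ (T.children_finite T.o), T.children_ncard_root]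
      simp
    · have : ∀ v ∈ F, ((T.children_finite v).toFinset).card = q := by
        intro v hv
        rw [hF, Set.Finite.mem_toFinset] at hv
        have hvn : T.nrm v = n := hv
        obtain ⟨m, hm⟩ := Nat.exists_eq_add_of_lt hnpos
        rw [← Set.ncard_eq_toFinset_card _ (T.children_finite v)]
        exact T.children_ncard (n := n - 1) (by omega)
      rw [Finset.sum_congr rfl this, Finset.sum_const, smul_eq_mul, hFcard]
      have hn1 : ¬ (n + 1 = 0) := by omega
      rw [if_neg (by omega : ¬ n = 0), if_neg hn1]
      have : n + 1 - 1 = (n - 1) + 1 := by omega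
      rw [this, pow_succ]
      ring

lemma count_sph (n : ℕ) :
    Measure.count (T.Sph n) = ((if n = 0 then 1 else (q + 1) * q ^ (n - 1) : ℕ) : ℝ≥0∞) := by
  obtain ⟨hfin, hcard⟩ := T.sph_finite_card n
  rw [Measure.count_apply_finite _ hfin, ← Set.ncard_eq_toFinset_card _ hfin, hcard]

lemma count_sph_ge (hq : 1 ≤ q) (n : ℕ) :
    ((q : ℝ≥0∞)) ^ n ≤ Measure.count (T.Sph n) := by
  rw [T.count_sph n]
  have h : q ^ n ≤ (if n = 0 then 1 else (q + 1) * q ^ (n - 1) : ℕ) := by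
    rcases Nat.eq_zero_or_pos n with h | h
    · simp [h]
    · rw [if_neg (by omega)]
      calc q ^ n = q * q ^ (n - 1) := by
            rw [← pow_succ']; congr 1; omega
        _ ≤ (q + 1) * q ^ (n - 1) := by
            exact Nat.mul_le_mul_right _ (by omega)
  calc ((q : ℝ≥0∞)) ^ n = ((q ^ n : ℕ) : ℝ≥0∞) := by push_cast; ring
    _ ≤ _ := by exact_mod_cast Nat.cast_le.mpr h

lemma geom_aux (hq : 2 ≤ q) : ∀ N : ℕ, ∑ k ∈ Finset.range N, q ^ (k + 1) ≤ q ^ (N + 1) := by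
  intro N
  induction N with
  | zero => simp
  | succ N ih =>
    rw [Finset.sum_range_succ]
    have h2 : q ^ (N + 1) + q ^ (N + 1) ≤ q ^ (N + 1 + 1) := by
      calc q ^ (N + 1) + q ^ (N + 1) = 2 * q ^ (N + 1) := by ring
        _ ≤ q * q ^ (N + 1) := Nat.mul_le_mul_right _ hq
        _ = q ^ (N + 1 + 1) := by ring
    omega

lemma count_ball_le (hq : 2 ≤ q) (N : ℕ) :
    Measure.count {x : T.X | T.nrm x ≤ N} ≤ ((q : ℝ≥0∞)) ^ (N + 2) := by
  have hsub : {x : T.X | T.nrm x ≤ N} = ⋃ k ∈ Finset.range (N + 1), T.Sph k := by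
    ext x
    simp only [Set.mem_setOf_eq, Set.mem_iUnion, Finset.mem_range, exists_prop, Sph]
    constructor
    · intro h; exact ⟨T.nrm x, by omega, rfl⟩
    · rintro ⟨k, hk, rfl⟩; omega
  rw [hsub]
  calc Measure.count (⋃ k ∈ Finset.range (N + 1), T.Sph k)
      ≤ ∑ k ∈ Finset.range (N + 1), Measure.count (T.Sph k) :=
        measure_biUnion_finset_le _ _
    _ ≤ ∑ k ∈ Finset.range (N + 1), ((q ^ (k + 1) : ℕ) : ℝ≥0∞) := by
        apply Finset.sum_le_sum
        intro k _
        rw [T.count_sph k]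
        apply Nat.cast_le.mpr
        rcases Nat.eq_zero_or_pos k with h | h
        · subst h
          have : (if 0 = 0 then 1 else (q + 1) * q ^ (0 - 1)) = 1 := by simp
          rw [this, pow_one]
          omega
        · rw [if_neg (by omega)]
          calc (q + 1) * q ^ (k - 1) ≤ (q * q) * q ^ (k - 1) := by
                apply Nat.mul_le_mul_right; nlinarith
            _ = q ^ (k - 1 + 2) := by ring
            _ = q ^ (k + 1) := by congr 1; omega
    _ = ((∑ k ∈ Finset.range (N + 1), q ^ (k + 1) : ℕ) : ℝ≥0∞) := by push_cast; ring
    _ ≤ ((q ^ (N + 2) : ℕ) : ℝ≥0∞) := by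
        exact_mod_cast Nat.cast_le.mpr (geom_aux hq (N + 1))
    _ = ((q : ℝ≥0∞)) ^ (N + 2) := by push_cast; ring

/-! ### Analysis layer -/




/-- the coefficient `(q-1)/(q+1)` -/
def aq (q : ℕ) : ℝ := ((q : ℝ) - 1) / ((q : ℝ) + 1)

/-- the radial profile of the singular spherical function -/
def Fq (q : ℕ) (n : ℕ) : ℝ := (aq q * n + 1) * (q : ℝ) ^ (-(n : ℝ) / 2)

lemma tau_pos (hq : 2 ≤ q) : 0 < tau q := by
  apply div_pos (by positivity)
  exact Real.log_pos (by exact_mod_cast hq.trans_lt' one_lt_two)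

lemma aq_nonneg (hq : 2 ≤ q) : 0 ≤ aq q := by
  apply div_nonneg
  · have : (2:ℝ) ≤ q := by exact_mod_cast hq
    linarith
  · positivity

lemma Fq_pos (hq : 2 ≤ q) (n : ℕ) : 0 < Fq q n := by
  have h1 : 0 ≤ aq q := aq_nonneg hq
  have h2 : (0:ℝ) < q := by positivity
  have : (0:ℝ) < aq q * n + 1 := by positivity
  exact mul_pos this (Real.rpow_pos_of_pos h2 _)

lemma Fq_succ_lt (hq : 2 ≤ q) (n : ℕ) : Fq q (n + 1) < Fq q n := by
  have hq0 : (0:ℝ) < q := by positivity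
  have hq1 : (1:ℝ) < q := by exact_mod_cast hq.trans_lt' one_lt_two
  set r : ℝ := (q:ℝ) ^ ((1:ℝ)/2) with hrdef
  have hr_pos : 0 < r := Real.rpow_pos_of_pos hq0 _
  have hr2 : r ^ 2 = q := by
    rw [hrdef, ← Real.rpow_natCast ((q:ℝ) ^ ((1:ℝ)/2)) 2, ← Real.rpow_mul hq0.le]
    norm_num
  have hr1 : 1 < r := by
    rw [hrdef]
    exact Real.one_lt_rpow_iff_of_pos hq0 |>.2 (Or.inl ⟨hq1, by norm_num⟩)
  have hsplit : (q:ℝ) ^ (-(↑(n+1) : ℝ)/2) = (q:ℝ) ^ (-(n:ℝ)/2) * r⁻¹ := by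
    rw [hrdef, ← Real.rpow_neg_one ((q:ℝ) ^ ((1:ℝ)/2)), ← Real.rpow_mul hq0.le,
      ← Real.rpow_add hq0]
    congr 1
    push_cast
    ring
  have ha : aq q = (r ^ 2 - 1) / (r ^ 2 + 1) := by rw [aq, hr2]
  have hkey : (aq q * (n + 1) + 1) * r⁻¹ < aq q * n + 1 := by
    have hden : (0:ℝ) < r ^ 2 + 1 := by positivity
    have ha0 : 0 ≤ aq q := by
      rw [ha]; apply div_nonneg _ hden.le; nlinarith
    have hn0 : (0:ℝ) ≤ (n:ℝ) := Nat.cast_nonneg n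
    have hr1' : (0:ℝ) < r - 1 := by linarith
    have ha1 : aq q + 1 < r := by
      rw [ha, div_add' _ _ _ hden.ne', div_lt_iff₀ hden]
      nlinarith [mul_pos hr_pos (mul_pos hr1' hr1')]
    rw [inv_eq_one_div, mul_one_div, div_lt_iff₀ hr_pos]
    nlinarith [mul_le_mul_of_nonneg_left hr1.le (mul_nonneg ha0 hn0)]
  calc Fq q (n+1) = ((aq q * (n+1) + 1) * r⁻¹) * ((q:ℝ) ^ (-(n:ℝ)/2)) := by
        rw [Fq, hsplit]; push_cast; ring
    _ < (aq q * n + 1) * ((q:ℝ) ^ (-(n:ℝ)/2)) := by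
        apply mul_lt_mul_of_pos_right hkey (Real.rpow_pos_of_pos hq0 _)
    _ = Fq q n := rfl

lemma Fq_anti (hq : 2 ≤ q) : StrictAnti (Fq q) :=
  strictAnti_nat_of_succ_lt (Fq_succ_lt hq)

/-- absolute value of the `q`-power factor -/
lemma abs_qpow (hq : 2 ≤ q) (w : ℂ) :
    ‖(q : ℂ) ^ w‖ = (q : ℝ) ^ w.re := by
  have hq0 : (0:ℝ) < q := by positivity
  rw [show ((q:ℕ) : ℂ) = (((q:ℕ):ℝ) : ℂ) by push_cast; rfl]
  exact Complex.norm_cpow_eq_rpow_re_of_pos hq0 w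

lemma abs_coeff (hq : 2 ≤ q) (n : ℕ) :
    ‖(((q : ℂ) - 1) / ((q : ℂ) + 1)) * (n : ℂ) + 1‖ = aq q * n + 1 := by
  have hcast : (((q : ℂ) - 1) / ((q : ℂ) + 1)) * (n : ℂ) + 1 = ((aq q * n + 1 : ℝ) : ℂ) := by
    rw [aq]; push_cast; ring
  rw [hcast, Complex.norm_real, Real.norm_eq_abs, abs_of_pos]
  have h1 : 0 ≤ aq q := aq_nonneg hq
  positivity

lemma sph_abs_singular (hq : 2 ≤ q) {z : ℂ}
    (hz : ∃ k : ℤ, z = (k : ℂ) * ((tau q / 2 : ℝ) : ℂ)) (x : T.X) :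
    ‖T.sph z x‖ = Fq q (T.nrm x) := by
  obtain ⟨k, hk⟩ := hz
  have htau := tau_pos hq
  have hre : (-(T.nrm x : ℂ) / 2).re = -(T.nrm x : ℝ) / 2 := by
    rw [show (-(T.nrm x : ℂ) / 2) = ((-(T.nrm x : ℝ) / 2 : ℝ) : ℂ) by push_cast; ring]
    exact Complex.ofReal_re _
  rcases Int.even_or_odd k with ⟨j, hj⟩ | ⟨j, hj⟩
  · have hcond : ∃ m : ℤ, z = (m : ℂ) * (tau q : ℂ) := by
      refine ⟨j, ?_⟩
      rw [hk, hj]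
      push_cast
      ring
    rw [sph, if_pos hcond, norm_mul, abs_coeff hq, abs_qpow hq, hre, Fq]
  · have hcond1 : ¬ ∃ m : ℤ, z = (m : ℂ) * (tau q : ℂ) := by
      rintro ⟨m, hm⟩
      rw [hk] at hm
      have hr : ((2 * j + 1 : ℤ) : ℝ) * (tau q / 2) = (m : ℝ) * tau q := by
        have := hm
        rw [hj] at this
        exact_mod_cast this
      have h2 : ((2 * j + 1 : ℤ) : ℝ) = 2 * m := by
        field_simp at hr
        have hr' : (2 * (j:ℝ) + 1) * tau q = (2 * (m:ℝ)) * tau q := by push_cast at hr; rw [hr]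
        have := mul_right_cancel₀ htau.ne' hr'
        push_cast
        linarith
      have : (2 * j + 1 : ℤ) = 2 * m := by exact_mod_cast h2
      omega
    have hcond2 : ∃ m : ℤ, z = (tau q : ℂ) / 2 + (m : ℂ) * (tau q : ℂ) := by
      refine ⟨j, ?_⟩
      rw [hk, hj]
      push_cast
      ring
    rw [sph, if_neg hcond1, if_pos hcond2, norm_mul, norm_mul, abs_qpow hq, hre,
      abs_coeff hq]
    simp [Fq]

lemma sph_abs_regular (hq : 2 ≤ q) {z : ℂ} (him : z.im = 0)
    (hnk : ¬∃ k : ℤ, z = (k : ℂ) * ((tau q / 2 : ℝ) : ℂ)) (x : T.X) :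
    ‖T.sph z x‖ ≤
      (‖cfun q z‖ + ‖cfun q (-z)‖) *
        (q : ℝ) ^ (-(T.nrm x : ℝ) / 2) := by
  have hcond1 : ¬ ∃ m : ℤ, z = (m : ℂ) * (tau q : ℂ) := by
    rintro ⟨m, hm⟩
    exact hnk ⟨2 * m, by rw [hm]; push_cast; ring⟩
  have hcond2 : ¬ ∃ m : ℤ, z = (tau q : ℂ) / 2 + (m : ℂ) * (tau q : ℂ) := by
    rintro ⟨m, hm⟩
    exact hnk ⟨2 * m + 1, by rw [hm]; push_cast; ring⟩
  rw [sph, if_neg hcond1, if_neg hcond2]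
  have hre1 : ((I * z - 1 / 2) * (T.nrm x : ℂ)).re = -(T.nrm x : ℝ) / 2 := by
    simp [Complex.mul_re, Complex.sub_re, Complex.mul_im, Complex.I_re, Complex.I_im, him]
    try ring
  have hre2 : ((-(I * z) - 1 / 2) * (T.nrm x : ℂ)).re = -(T.nrm x : ℝ) / 2 := by
    simp [Complex.mul_re, Complex.sub_re, Complex.mul_im, Complex.I_re, Complex.I_im, him]
    try ring
  calc ‖cfun q z * (q : ℂ) ^ ((I * z - 1 / 2) * (T.nrm x : ℂ)) +
        cfun q (-z) * (q : ℂ) ^ ((-(I * z) - 1 / 2) * (T.nrm x : ℂ))‖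
      ≤ ‖cfun q z * (q : ℂ) ^ ((I * z - 1 / 2) * (T.nrm x : ℂ))‖ +
        ‖cfun q (-z) * (q : ℂ) ^ ((-(I * z) - 1 / 2) * (T.nrm x : ℂ))‖ := by
        apply norm_add_le
    _ = (‖cfun q z‖ + ‖cfun q (-z)‖) *
        (q : ℝ) ^ (-(T.nrm x : ℝ) / 2) := by
        rw [norm_mul, norm_mul, abs_qpow hq, abs_qpow hq, hre1, hre2]
        ring

/-- the singular case: the weak norm is infinite -/
lemma weakN_singular (hq : 2 ≤ q) {z : ℂ}
    (hz : ∃ k : ℤ, z = (k : ℂ) * ((tau q / 2 : ℝ) : ℂ)) :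
    weakN 2 (T.sph z) = ⊤ := by
  have hq0 : (0:ℝ) < q := by positivity
  set W := weakN 2 (T.sph z) with hW
  set c : ℝ := aq q * (q : ℝ) ^ (-(1:ℝ)/2) with hc
  have hc_pos : 0 < c := by
    apply mul_pos _ (Real.rpow_pos_of_pos hq0 _)
    rw [aq]
    apply div_pos _ (by positivity)
    have : (2:ℝ) ≤ q := by exact_mod_cast hq
    linarith
  have hmain : ∀ n : ℕ, ENNReal.ofReal (c * (n + 1)) ≤ W := by
    intro n
    set t : ℝ := Fq q (n + 1) with ht
    have ht_pos : 0 < t := Fq_pos hq (n + 1)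
    have hsub : T.Sph n ⊆ {y | t < ‖T.sph z y‖} := by
      intro y hy
      have : T.nrm y = n := hy
      rw [Set.mem_setOf_eq, T.sph_abs_singular hq hz, this]
      exact Fq_succ_lt hq n
    have hcount : ((q : ℝ≥0∞)) ^ n ≤ Measure.count {y | t < ‖T.sph z y‖} :=
      (T.count_sph_ge (by omega) n).trans (measure_mono hsub)
    have hterm : ENNReal.ofReal t * (((q : ℝ≥0∞)) ^ n) ^ ((1:ℝ)/2) ≤ W := by
      rw [hW, weakN]
      refine le_trans ?_ (le_iSup _ t)
      gcongr
    refine le_trans ?_ hterm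
    have hq_cast : ((q : ℝ≥0∞)) ^ n = ENNReal.ofReal ((q:ℝ) ^ n) := by
      rw [← ENNReal.ofReal_natCast q, ← ENNReal.ofReal_pow hq0.le]
    rw [hq_cast, ENNReal.ofReal_rpow_of_pos (by positivity),
      ← ENNReal.ofReal_mul ht_pos.le]
    apply ENNReal.ofReal_le_ofReal
    have hpow : ((q:ℝ) ^ n) ^ ((1:ℝ)/2) = (q:ℝ) ^ ((n:ℝ)/2) := by
      rw [← Real.rpow_natCast (q:ℝ) n, ← Real.rpow_mul hq0.le]
      congr 1
      ring
    rw [hpow, ht, Fq]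
    have hmul : (q:ℝ) ^ (-(↑(n+1):ℝ)/2) * (q:ℝ) ^ ((n:ℝ)/2) = (q:ℝ) ^ (-(1:ℝ)/2) := by
      rw [← Real.rpow_add hq0]
      congr 1
      push_cast
      ring
    calc c * (n + 1) = aq q * (n + 1) * (q:ℝ) ^ (-(1:ℝ)/2) := by rw [hc]; ring
      _ ≤ (aq q * (↑(n+1)) + 1) * ((q:ℝ) ^ (-(↑(n+1):ℝ)/2) * (q:ℝ) ^ ((n:ℝ)/2)) := by
          rw [hmul]
          have := Real.rpow_pos_of_pos hq0 (-(1:ℝ)/2)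
          have hcast : ((n:ℝ) + 1) = (↑(n+1):ℝ) := by push_cast; ring
          rw [hcast]
          nlinarith
      _ = aq q * (↑(n+1)) * (q:ℝ) ^ (-(↑(n+1):ℝ)/2) * (q:ℝ) ^ ((n:ℝ)/2) +
          (q:ℝ) ^ (-(↑(n+1):ℝ)/2) * (q:ℝ) ^ ((n:ℝ)/2) := by ring
      _ = (aq q * ↑(n + 1) + 1) * (q:ℝ) ^ (-(↑(n+1):ℝ)/2) * (q:ℝ) ^ ((n:ℝ)/2) := by ring
  by_contra hWtop
  obtain ⟨n, hn⟩ := exists_nat_ge ((W.toReal + 1) / c)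
  have h1 : W.toReal + 1 ≤ c * (n + 1) := by
    rw [div_le_iff₀ hc_pos] at hn
    nlinarith
  have h2 : W < ENNReal.ofReal (c * (n + 1)) := by
    rw [ENNReal.lt_ofReal_iff_toReal_lt hWtop]
    linarith
  exact absurd (hmain n) h2.not_ge

/-- the regular case: the weak norm is finite -/
lemma weakN_regular (hq : 2 ≤ q) {z : ℂ} (him : z.im = 0)
    (hnk : ¬∃ k : ℤ, z = (k : ℂ) * ((tau q / 2 : ℝ) : ℂ)) :
    weakN 2 (T.sph z) < ⊤ := by
  have hq0 : (0:ℝ) < q := by positivity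
  have hq1 : (1:ℝ) < q := by exact_mod_cast hq.trans_lt' one_lt_two
  set C : ℝ := ‖cfun q z‖ + ‖cfun q (-z)‖ with hC
  have hC0 : 0 ≤ C := by positivity
  have habs : ∀ x : T.X, ‖T.sph z x‖ ≤ C * (q : ℝ) ^ (-(T.nrm x : ℝ)/2) :=
    T.sph_abs_regular hq him hnk
  have hbound : ∀ t : ℝ, ENNReal.ofReal t *
      (Measure.count {y | t < ‖T.sph z y‖}) ^ ((1:ℝ)/2) ≤
      ENNReal.ofReal ((q:ℝ) * C) := by
    intro t
    rcases le_or_gt t 0 with ht | ht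
    · rw [ENNReal.ofReal_eq_zero.mpr ht, zero_mul]
      exact zero_le
    -- t > 0
    have hP : ∃ m : ℕ, (C / t) ^ 2 < (q:ℝ) ^ m := pow_unbounded_of_one_lt _ hq1
    set M := Nat.find hP with hM
    have hPM : (C / t) ^ 2 < (q:ℝ) ^ M := Nat.find_spec hP
    rcases Nat.eq_zero_or_pos M with hM0 | hM1
    · -- the set is empty
      have hempty : {y : T.X | t < ‖T.sph z y‖} = ∅ := by
        rw [Set.eq_empty_iff_forall_notMem]
        intro y hy
        rw [Set.mem_setOf_eq] at hy
        have h1 : t < C * (q:ℝ) ^ (-(T.nrm y : ℝ)/2) := lt_of_lt_of_le hy (habs y)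
        have h2 : (q:ℝ) ^ (-(T.nrm y : ℝ)/2) ≤ 1 := by
          apply Real.rpow_le_one_of_one_le_of_nonpos hq1.le
          have : (0:ℝ) ≤ (T.nrm y : ℝ) := Nat.cast_nonneg _
          linarith
        have h3 : t < C := by nlinarith
        have h4 : 1 < C / t := (one_lt_div ht).mpr h3
        rw [hM0] at hPM
        simp only [pow_zero] at hPM
        nlinarith
      rw [hempty, measure_empty, ENNReal.zero_rpow_of_pos (by norm_num), mul_zero]
      exact zero_le
    · -- M ≥ 1
      have hlast : ¬ (C / t) ^ 2 < (q:ℝ) ^ (M - 1) := Nat.find_min hP (by omega)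
      push_neg at hlast
      have hsub : {y : T.X | t < ‖T.sph z y‖} ⊆ {x : T.X | T.nrm x ≤ M - 1} := by
        intro y hy
        rw [Set.mem_setOf_eq] at hy ⊢
        have h1 : t < C * (q:ℝ) ^ (-(T.nrm y : ℝ)/2) := lt_of_lt_of_le hy (habs y)
        set n := T.nrm y
        have hpow_pos : (0:ℝ) < (q:ℝ) ^ ((n:ℝ)/2) := Real.rpow_pos_of_pos hq0 _
        have hinv : (q:ℝ) ^ (-(n:ℝ)/2) * (q:ℝ) ^ ((n:ℝ)/2) = 1 := by
          rw [← Real.rpow_add hq0, show -(n:ℝ)/2 + (n:ℝ)/2 = 0 by ring, Real.rpow_zero]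
        have h2 : t * (q:ℝ) ^ ((n:ℝ)/2) < C := by
          calc t * (q:ℝ) ^ ((n:ℝ)/2) < C * (q:ℝ) ^ (-(n:ℝ)/2) * (q:ℝ) ^ ((n:ℝ)/2) := by
                exact mul_lt_mul_of_pos_right h1 hpow_pos
            _ = C := by rw [mul_assoc, hinv, mul_one]
        have h3 : (q:ℝ) ^ ((n:ℝ)/2) < C / t := (lt_div_iff₀ ht).mpr (by linarith)
        have h4 : (q:ℝ) ^ (n:ℕ) < (C / t) ^ 2 := by
          have hsq : ((q:ℝ) ^ ((n:ℝ)/2)) ^ 2 = (q:ℝ) ^ (n:ℕ) := by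
            rw [← Real.rpow_natCast ((q:ℝ) ^ ((n:ℝ)/2)) 2, ← Real.rpow_mul hq0.le,
              ← Real.rpow_natCast (q:ℝ) n]
            congr 1
            ring
          rw [← hsq]
          have := hpow_pos
          nlinarith
        have h5 : (q:ℝ) ^ (n:ℕ) < (q:ℝ) ^ M := h4.trans hPM
        have h6 : n < M := by
          by_contra hcon
          push_neg at hcon
          exact absurd (pow_le_pow_right₀ hq1.le hcon) h5.not_ge
        omega
      have hcount := (measure_mono hsub).trans (T.count_ball_le hq (M - 1))
      have hM2 : M - 1 + 2 = M + 1 := by omega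
      rw [hM2] at hcount
      -- convert to real bound
      have hqE : ((q : ℝ≥0∞)) ^ (M + 1) = ENNReal.ofReal ((q:ℝ) ^ (M + 1)) := by
        rw [← ENNReal.ofReal_natCast q, ← ENNReal.ofReal_pow hq0.le]
      calc ENNReal.ofReal t * (Measure.count {y | t < ‖T.sph z y‖}) ^ ((1:ℝ)/2)
          ≤ ENNReal.ofReal t * (ENNReal.ofReal ((q:ℝ) ^ (M + 1))) ^ ((1:ℝ)/2) := by
            gcongr
            rw [← hqE]
            exact hcount
        _ = ENNReal.ofReal (t * ((q:ℝ) ^ (M + 1)) ^ ((1:ℝ)/2)) := by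
            rw [ENNReal.ofReal_rpow_of_pos (by positivity), ← ENNReal.ofReal_mul ht.le]
        _ ≤ ENNReal.ofReal ((q:ℝ) * C) := by
            apply ENNReal.ofReal_le_ofReal
            have hle : ((q:ℝ) ^ (M + 1)) ≤ ((q:ℝ) * (C / t)) ^ 2 := by
              have : (q:ℝ) ^ (M + 1) = (q:ℝ) ^ 2 * (q:ℝ) ^ (M - 1) := by
                rw [← pow_add]
                congr 1
                omega
              rw [this, mul_pow]
              have hq2 : (0:ℝ) ≤ (q:ℝ)^2 := by positivity
              nlinarith
            have hqC : (0:ℝ) ≤ (q:ℝ) * (C / t) := by positivity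
            have h7 : ((q:ℝ) ^ (M + 1)) ^ ((1:ℝ)/2) ≤ (q:ℝ) * (C / t) := by
              calc ((q:ℝ) ^ (M + 1)) ^ ((1:ℝ)/2) ≤ (((q:ℝ) * (C / t)) ^ 2) ^ ((1:ℝ)/2) := by
                    apply Real.rpow_le_rpow (by positivity) hle (by norm_num)
                _ = (q:ℝ) * (C / t) := by
                    rw [← Real.rpow_natCast ((q:ℝ) * (C / t)) 2, ← Real.rpow_mul hqC]
                    norm_num
            calc t * ((q:ℝ) ^ (M + 1)) ^ ((1:ℝ)/2) ≤ t * ((q:ℝ) * (C / t)) := by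
                  exact mul_le_mul_of_nonneg_left h7 ht.le
              _ = (q:ℝ) * C := by field_simp
    -- end t > 0
  calc weakN 2 (T.sph z) ≤ ENNReal.ofReal ((q:ℝ) * C) := by
        rw [weakN]
        exact iSup_le (by exact_mod_cast hbound)
    _ < ⊤ := ENNReal.ofReal_lt_top


/-- `φ_z ∉ L^{2,∞}(𝔛)` if `z ∈ (τ/2)ℤ`, whereas `φ_z ∈ L^{2,∞}(𝔛)` if `z ∈ ℝ \ (τ/2)ℤ`. -/
theorem statement2 {q : ℕ} (hq : 2 ≤ q) (T : HomTree q) (z : ℂ) :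
    ((∃ k : ℤ, z = (k : ℂ) * ((tau q / 2 : ℝ) : ℂ)) → weakN 2 (T.sph z) = ⊤) ∧
    ((z.im = 0 ∧ ¬∃ k : ℤ, z = (k : ℂ) * ((tau q / 2 : ℝ) : ℂ)) → weakN 2 (T.sph z) < ⊤) :=
  ⟨fun hz => T.weakN_singular hq hz, fun h => T.weakN_regular hq h.1 h.2⟩

end HomTree
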